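/- The RC equation of state satisfies the admissibility conditions: the function h(p,ρ) = (12p² + 8pρ + 2ρ²)/(3pρ + 2ρ²) on (0,∞)×(0,∞) satisfies, for all p, ρ > 0: (heq1) h(p,ρ) ≥ √(1 + p²/ρ²) + p/ρ, and (heq2) h(p,ρ)·(1/ρ − ∂h/∂p(p,ρ)) < ∂h/∂ρ(p,ρ) < 0. -/

import Mathlib

noncomputable section

/-- The RC EOS `h(p,ρ) = (12p² + 8pρ + 2ρ²)/(3pρ + 2ρ²)`. -/
def hRC (p ρ : ℝ) : ℝ := (12 * p ^ 2 + 8 * p * ρ + 2 * ρ ^ 2) / (3 * p * ρ + 2 * ρ ^ 2)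

theorem hRC_deriv_p (p ρ : ℝ) (hp : 0 < p) (hρ : 0 < ρ) :
    deriv (fun p' => hRC p' ρ) p
      = (36 * p ^ 2 + 48 * p * ρ + 10 * ρ ^ 2) / (ρ * (3 * p + 2 * ρ) ^ 2) := by
  have hD : (3 * p * ρ + 2 * ρ ^ 2) ≠ 0 := by positivity
  have hN : HasDerivAt (fun x : ℝ => 12 * x ^ 2 + 8 * x * ρ + 2 * ρ ^ 2) (24 * p + 8 * ρ) p := by
    have h1 := (hasDerivAt_pow 2 p).const_mul (12 : ℝ)
    have h2 := ((hasDerivAt_id' (x := p)).mul_const ρ).const_mul (8 : ℝ)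
    have h3 := (h1.add h2).add_const (2 * ρ ^ 2)
    convert h3 using 2 <;> first | rfl | (norm_num; ring) | (simp only [Pi.add_apply]; ring) | ring
  have hDD : HasDerivAt (fun x : ℝ => 3 * x * ρ + 2 * ρ ^ 2) (3 * ρ) p := by
    have h1 := (((hasDerivAt_id' (x := p)).const_mul (3 : ℝ)).mul_const ρ).add_const (2 * ρ ^ 2)
    convert h1 using 2 <;> first | rfl | (norm_num; ring) | (simp only [Pi.add_apply]; ring) | ring
  have h : HasDerivAt (fun x : ℝ => (12 * x ^ 2 + 8 * x * ρ + 2 * ρ ^ 2) / (3 * x * ρ + 2 * ρ ^ 2)) _ p := (hN.div hDD hD)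
  rw [show (fun p' => hRC p' ρ) = fun x : ℝ =>
      (12 * x ^ 2 + 8 * x * ρ + 2 * ρ ^ 2) / (3 * x * ρ + 2 * ρ ^ 2) from rfl]
  rw [h.deriv]
  have h2 : ρ * (3 * p + 2 * ρ) ^ 2 ≠ 0 := by positivity
  field_simp
  ring

theorem hRC_deriv_ρ (p ρ : ℝ) (hp : 0 < p) (hρ : 0 < ρ) :
    deriv (fun ρ' => hRC p ρ') ρ
      = -(p * (36 * p ^ 2 + 48 * p * ρ + 10 * ρ ^ 2)) / (ρ ^ 2 * (3 * p + 2 * ρ) ^ 2) := by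
  have hD : (3 * p * ρ + 2 * ρ ^ 2) ≠ 0 := by positivity
  have hN : HasDerivAt (fun y : ℝ => 12 * p ^ 2 + 8 * p * y + 2 * y ^ 2) (8 * p + 4 * ρ) ρ := by
    have h1 := ((hasDerivAt_id' (x := ρ)).const_mul (8 * p)).const_add (12 * p ^ 2)
    have h2 := (hasDerivAt_pow 2 ρ).const_mul (2 : ℝ)
    have h3 := h1.add h2
    convert h3 using 2 <;> first | rfl | (norm_num; ring) | (simp only [Pi.add_apply]; ring) | ring
  have hDD : HasDerivAt (fun y : ℝ => 3 * p * y + 2 * y ^ 2) (3 * p + 4 * ρ) ρ := by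
    have h1 := ((hasDerivAt_id' (x := ρ)).const_mul (3 * p)).add ((hasDerivAt_pow 2 ρ).const_mul (2 : ℝ))
    convert h1 using 2 <;> first | rfl | (norm_num; ring) | (simp only [Pi.add_apply]; ring) | ring
  have h : HasDerivAt (fun y : ℝ => (12 * p ^ 2 + 8 * p * y + 2 * y ^ 2) / (3 * p * y + 2 * y ^ 2)) _ ρ := (hN.div hDD hD)
  rw [show (fun ρ' => hRC p ρ') = fun y : ℝ =>
      (12 * p ^ 2 + 8 * p * y + 2 * y ^ 2) / (3 * p * y + 2 * y ^ 2) from rfl]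
  rw [h.deriv]
  have h2 : ρ ^ 2 * (3 * p + 2 * ρ) ^ 2 ≠ 0 := by positivity
  field_simp
  ring

/-- The RC EOS satisfies (heq1) and (heq2). -/
theorem rcEOS_admissible (p ρ : ℝ) (hp : 0 < p) (hρ : 0 < ρ) :
    Real.sqrt (1 + p ^ 2 / ρ ^ 2) + p / ρ ≤ hRC p ρ ∧
    hRC p ρ * (1 / ρ - deriv (fun p' => hRC p' ρ) p) < deriv (fun ρ' => hRC p ρ') ρ ∧
    deriv (fun ρ' => hRC p ρ') ρ < 0 := by
  have hD : (0:ℝ) < 3 * p * ρ + 2 * ρ ^ 2 := by positivity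
  set S : ℝ := (9 * p ^ 2 + 6 * p * ρ + 2 * ρ ^ 2) / (ρ * (3 * p + 2 * ρ)) with hSdef
  have hS : 0 < S := by positivity
  have hsplit : hRC p ρ = S + p / ρ := by
    rw [hSdef, hRC]; field_simp; ring
  refine ⟨?_, ?_, ?_⟩
  · -- heq1
    have hsq : 1 + p ^ 2 / ρ ^ 2 ≤ S ^ 2 := by
      rw [← sub_nonneg]
      have : S ^ 2 - (1 + p ^ 2 / ρ ^ 2)
          = (72 * p ^ 4 + 96 * p ^ 3 * ρ + 59 * p ^ 2 * ρ ^ 2 + 12 * p * ρ ^ 3)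
            / (ρ ^ 2 * (3 * p + 2 * ρ) ^ 2) := by
        rw [hSdef]; field_simp; ring
      rw [this]; positivity
    have hle : Real.sqrt (1 + p ^ 2 / ρ ^ 2) ≤ S := by
      calc Real.sqrt (1 + p ^ 2 / ρ ^ 2) ≤ Real.sqrt (S ^ 2) := Real.sqrt_le_sqrt hsq
        _ = S := by rw [Real.sqrt_sq hS.le]
    rw [hsplit]; linarith
  · rw [hRC_deriv_p p ρ hp hρ, hRC_deriv_ρ p ρ hp hρ, ← sub_pos]
    have : -(p * (36 * p ^ 2 + 48 * p * ρ + 10 * ρ ^ 2)) / (ρ ^ 2 * (3 * p + 2 * ρ) ^ 2)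
        - hRC p ρ * (1 / ρ - (36 * p ^ 2 + 48 * p * ρ + 10 * ρ ^ 2) / (ρ * (3 * p + 2 * ρ) ^ 2))
        = (216 * p ^ 4 + 432 * p ^ 3 * ρ + 288 * p ^ 2 * ρ ^ 2 + 100 * p * ρ ^ 3 + 12 * ρ ^ 4)
          / (ρ ^ 2 * (3 * p + 2 * ρ) ^ 3) := by
      rw [hRC]; field_simp; ring
    rw [this]; positivity
  · rw [hRC_deriv_ρ p ρ hp hρ]
    have h1 : (0:ℝ) < p * (36 * p ^ 2 + 48 * p * ρ + 10 * ρ ^ 2) := by positivity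
    have h2 : (0:ℝ) < ρ ^ 2 * (3 * p + 2 * ρ) ^ 2 := by positivity
    exact div_neg_of_neg_of_pos (neg_neg_of_pos h1) h2
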